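/- Fix q ∈ ℝ^d, r > 0, and α > 0. Let t be a random vector distributed uniformly in [0, α)^d, and consider the randomly shifted grid whose cells are the cubes t + αz + [0, α)^d for z ∈ ℤ^d. Then the probability that the closed ball B(q, r) is contained inside a single cell of this shifted grid is at least 1 − 2rd/α. -/

import Mathlib

open Metric MeasureTheory


lemma abs_coord_le {d : ℕ} (x q : EuclideanSpace ℝ (Fin d)) (i : Fin d) :
    |x i - q i| ≤ dist x q := by
  rw [EuclideanSpace.dist_eq, ← Real.sqrt_sq_eq_abs]
  apply Real.sqrt_le_sqrt
  have := Finset.single_le_sum (f := fun j => dist (x j) (q j) ^ 2)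
    (fun j _ => sq_nonneg _) (Finset.mem_univ i)
  simpa [Real.dist_eq] using this

lemma coord_good (c r α : ℝ) (hr : 0 < r) (hα : 0 < α) (h2 : 2*r ≤ α) :
    ENNReal.ofReal (α - 2*r) ≤
      volume (Set.Ico (0:ℝ) α ∩ ⋃ z : ℤ, Set.Ioc (c + r - α - α*z) (c - r - α*z)) := by
  set T : Set ℝ := ⋃ z : ℤ, Set.Ioc (c + r - α - α*z) (c - r - α*z) with hT
  have hTm : MeasurableSet T := MeasurableSet.iUnion fun z => measurableSet_Ioc
  set M : ℤ := ⌊(c + r)/α⌋ with hM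
  set b : ℝ := c + r - α * M with hb
  have hMle : α * M ≤ c + r := by
    have h := Int.floor_le ((c+r)/α)
    rw [le_div_iff₀ hα] at h
    linarith [h]
  have hb0 : 0 ≤ b := by simp [hb]; linarith
  have hsub : Set.Ico (0:ℝ) α \ T ⊆
      Set.Icc (max 0 (b - 2*r)) b ∪ Set.Icc (b + α - 2*r) α := by
    rintro s ⟨⟨hs0, hsα⟩, hsT⟩
    set z₀ : ℤ := ⌊(c - r - s)/α⌋ with hz₀
    have h1 : α * z₀ ≤ c - r - s := by
      have h := Int.floor_le ((c - r - s)/α)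
      rw [le_div_iff₀ hα] at h; linarith
    have h2' : c - r - s < α * (z₀ + 1) := by
      have h := Int.lt_floor_add_one ((c - r - s)/α)
      rw [div_lt_iff₀ hα] at h; push_cast; linarith
    have h3 : ¬ (c + r - α - α * z₀ < s ∧ s ≤ c - r - α * z₀) := by
      intro h
      exact hsT (Set.mem_iUnion.mpr ⟨z₀, h.1, h.2⟩)
    have h4 : s ≤ c + r - α - α * z₀ := by
      by_contra h; push_neg at h
      exact h3 ⟨h, by linarith⟩
    have hmM : z₀ + 1 ≤ M := by
      rw [hM]
      apply Int.le_floor.mpr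
      rw [le_div_iff₀ hα]
      push_cast
      nlinarith
    have hmM' : M - 1 ≤ z₀ + 1 := by
      have hc : (M:ℝ) - 2 < (z₀:ℝ) + 1 := by nlinarith
      have : (M:ℤ) - 2 < z₀ + 1 := by exact_mod_cast hc
      omega
    have hcase : z₀ + 1 = M ∨ z₀ + 1 = M - 1 := by omega
    rcases hcase with hc | hc
    · left
      have hcr : ((z₀:ℝ) + 1) = (M:ℝ) := by exact_mod_cast hc
      constructor
      · exact max_le hs0 (by nlinarith)
      · nlinarith
    · right
      have hcr : (↑z₀ : ℝ) + 1 = (M:ℝ) - 1 := by exact_mod_cast hc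
      constructor
      · nlinarith
      · linarith
  have hbad : volume (Set.Ico (0:ℝ) α \ T) ≤ ENNReal.ofReal (2*r) := by
    refine le_trans (measure_mono hsub) (le_trans (measure_union_le _ _) ?_)
    rw [Real.volume_Icc, Real.volume_Icc]
    rcases le_total b (2*r) with h | h
    · have hmx : max 0 (b - 2*r) = 0 := max_eq_left (by linarith)
      rw [hmx, sub_zero, ← ENNReal.ofReal_add hb0 (by linarith : (0:ℝ) ≤ α - (b + α - 2*r))]
      exact ENNReal.ofReal_le_ofReal (by linarith)
    · have hmx : max 0 (b - 2*r) = b - 2*r := max_eq_right (by linarith)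
      rw [hmx]
      have h2' : ENNReal.ofReal (α - (b + α - 2*r)) = 0 := by
        rw [ENNReal.ofReal_eq_zero]; linarith
      rw [h2', add_zero]
      exact ENNReal.ofReal_le_ofReal (by linarith)
  have key : ENNReal.ofReal (α - 2*r) + ENNReal.ofReal (2*r)
      ≤ volume (Set.Ico (0:ℝ) α ∩ T) + ENNReal.ofReal (2*r) := by
    rw [← ENNReal.ofReal_add (by linarith) (by linarith)]
    have hh : α - 2*r + 2*r = α := by ring
    rw [hh]
    have hIco : ENNReal.ofReal α = volume (Set.Ico (0:ℝ) α) := by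
      rw [Real.volume_Ico, sub_zero]
    rw [hIco, ← measure_inter_add_diff (Set.Ico (0:ℝ) α) hTm]
    exact add_le_add_right hbad _
  exact (ENNReal.add_le_add_iff_right ENNReal.ofReal_ne_top).mp key

/-- For a randomly shifted grid of side length `α` (the shift `t` uniform in `[0, α)^d`),
the probability that the closed ball `B(q, r)` is contained in a single grid cell
`t + αz + [0, α)^d` is at least `1 - 2rd/α`. Stated measure-theoretically: the Lebesgue
volume of the set of good shifts `t ∈ [0, α)^d` is at least `(1 - 2rd/α) ⬝ α^d`. -/
theorem shifted_grid_contains_ball {d : ℕ} (q : EuclideanSpace ℝ (Fin d)) (r α : ℝ)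
    (hr : 0 < r) (hα : 0 < α) :
    ENNReal.ofReal ((1 - 2 * r * d / α) * α ^ d) ≤
      volume {t : EuclideanSpace ℝ (Fin d) |
        (∀ i, t i ∈ Set.Ico (0 : ℝ) α) ∧
        ∃ z : Fin d → ℤ, closedBall q r ⊆
          {x : EuclideanSpace ℝ (Fin d) |
            ∀ i, x i ∈ Set.Ico (t i + α * z i) (t i + α * z i + α)}} := by
  rcases Nat.eq_zero_or_pos d with hd | hd
  · subst hd
    have huniv : {t : EuclideanSpace ℝ (Fin 0) |
        (∀ i, t i ∈ Set.Ico (0 : ℝ) α) ∧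
        ∃ z : Fin 0 → ℤ, closedBall q r ⊆
          {x : EuclideanSpace ℝ (Fin 0) |
            ∀ i, x i ∈ Set.Ico (t i + α * z i) (t i + α * z i + α)}} = Set.univ := by
      ext t
      simp only [Set.mem_setOf_eq, Set.mem_univ, iff_true]
      exact ⟨fun i => i.elim0, ⟨fun i => 0, fun x _ i => i.elim0⟩⟩
    rw [huniv]
    have e := EuclideanSpace.volume_preserving_symm_measurableEquiv_toLp (Fin 0)
    have hv : volume (Set.univ : Set (EuclideanSpace ℝ (Fin 0))) = 1 := by
      have := e.measure_preimage (MeasurableSet.univ.nullMeasurableSet)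
      simp only [Set.preimage_univ] at this
      rw [this, MeasureTheory.volume_pi, Measure.pi_univ]
      simp
    rw [hv]
    simp only [Nat.cast_zero, mul_zero, zero_div, sub_zero, pow_zero, mul_one]
    simp
  by_cases hle : α ≤ 2*r*(d:ℝ)
  · have hneg : (1 - 2 * r * (d:ℝ) / α) * α ^ d ≤ 0 := by
      apply mul_nonpos_of_nonpos_of_nonneg
      · have : (1:ℝ) ≤ 2*r*(d:ℝ)/α := (one_le_div hα).mpr hle
        linarith
      · positivity
    rw [ENNReal.ofReal_eq_zero.mpr hneg]
    exact zero_le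
  push_neg at hle
  have hd1 : (1:ℝ) ≤ (d:ℝ) := by exact_mod_cast hd
  have h2r : 2*r ≤ α := by nlinarith
  set S : Fin d → Set ℝ := fun i =>
    Set.Ico (0:ℝ) α ∩ ⋃ z : ℤ, Set.Ioc (q i + r - α - α*z) (q i - r - α*z) with hS
  have hsub : {t : EuclideanSpace ℝ (Fin d) | ∀ i, t i ∈ S i} ⊆
      {t : EuclideanSpace ℝ (Fin d) |
        (∀ i, t i ∈ Set.Ico (0 : ℝ) α) ∧
        ∃ z : Fin d → ℤ, closedBall q r ⊆
          {x : EuclideanSpace ℝ (Fin d) |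
            ∀ i, x i ∈ Set.Ico (t i + α * z i) (t i + α * z i + α)}} := by
    intro t ht
    refine ⟨fun i => (ht i).1, ?_⟩
    have hz : ∀ i, ∃ z : ℤ, q i + r - α - α*z < t i ∧ t i ≤ q i - r - α*z := by
      intro i
      obtain ⟨z, hz1, hz2⟩ := Set.mem_iUnion.mp (ht i).2
      exact ⟨z, hz1, hz2⟩
    choose z hz1 hz2 using hz
    refine ⟨z, fun x hx => ?_⟩
    intro i
    have hxi : |x i - q i| ≤ r := le_trans (abs_coord_le x q i) (mem_closedBall.mp hx)
    rw [abs_le] at hxi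
    constructor
    · have := hz2 i; have := hxi.1; linarith
    · have := hz1 i; have := hxi.2; linarith
  refine le_trans ?_ (measure_mono hsub)
  have e := EuclideanSpace.volume_preserving_symm_measurableEquiv_toLp (Fin d)
  have hmeas : MeasurableSet (Set.pi Set.univ S) :=
    MeasurableSet.univ_pi fun i =>
      measurableSet_Ico.inter (MeasurableSet.iUnion fun z => measurableSet_Ioc)
  have hpre : (MeasurableEquiv.toLp 2 (Fin d → ℝ)).symm ⁻¹' (Set.pi Set.univ S) =
      {t : EuclideanSpace ℝ (Fin d) | ∀ i, t i ∈ S i} := by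
    ext t
    simp [MeasurableEquiv.coe_toLp_symm, Set.mem_pi]
  have hvol : volume {t : EuclideanSpace ℝ (Fin d) | ∀ i, t i ∈ S i}
      = ∏ i : Fin d, volume (S i) := by
    rw [← hpre, e.measure_preimage hmeas.nullMeasurableSet, volume_pi_pi]
  rw [hvol]
  have hreal : (1 - 2 * r * (d:ℝ) / α) * α ^ d ≤ (α - 2*r)^d := by
    have hbern : 1 + (d:ℝ) * (-(2*r/α)) ≤ (1 + (-(2*r/α)))^d :=
      one_add_mul_le_pow (by
        have : 2*r/α ≤ 1 := (div_le_one hα).mpr h2r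
        linarith) d
    have h1 : (1 - 2 * r * (d:ℝ) / α) = 1 + (d:ℝ) * (-(2*r/α)) := by ring
    have h2 : ((1 + (-(2*r/α)))) * α = α - 2*r := by
      field_simp
      ring
    calc (1 - 2 * r * (d:ℝ) / α) * α ^ d
        ≤ (1 + (-(2*r/α)))^d * α ^ d := by
          rw [h1]
          exact mul_le_mul_of_nonneg_right hbern (by positivity)
      _ = ((1 + (-(2*r/α))) * α)^d := (mul_pow _ _ _).symm
      _ = (α - 2*r)^d := by rw [h2]
  calc ENNReal.ofReal ((1 - 2 * r * (d:ℝ) / α) * α ^ d)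
      ≤ ENNReal.ofReal ((α - 2*r)^d) := ENNReal.ofReal_le_ofReal hreal
    _ = (ENNReal.ofReal (α - 2*r))^d := ENNReal.ofReal_pow (by linarith) d
    _ = ∏ _i : Fin d, ENNReal.ofReal (α - 2*r) := by
        simp [Finset.prod_const]
    _ ≤ ∏ i : Fin d, volume (S i) :=
        Finset.prod_le_prod' fun i _ => coord_good (q i) r α hr hα h2r
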